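/- Let (X,d) be a complete metric space. Then the Wijsman hyperspace (2^X, T_{W(d)}) is a Baire space. -/

import Mathlib

/-- The Wijsman hyperspace of a metric space `X`: the collection `2^X` of all
nonempty closed subsets of `X`. -/
def WijsmanHyperspace (X : Type*) [MetricSpace X] : Type _ :=
  {A : Set X // A.Nonempty ∧ IsClosed A}

/-- The Wijsman topology `T_{W(d)}`: the topology induced from the product topology
on `X → ℝ` by the injection `A ↦ (x ↦ d(x, A))`, i.e. the weakest topology making
all distance functionals `A ↦ d(x, A)` continuous. -/
noncomputable instance wijsmanTopology (X : Type*) [MetricSpace X] :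
    TopologicalSpace (WijsmanHyperspace X) :=
  TopologicalSpace.induced (fun A (x : X) => Metric.infDist x A.1) Pi.topologicalSpace

open Metric Set Filter Topology

namespace WijsmanAux

variable {X : Type*} [MetricSpace X]

/-- Basic Wijsman neighborhood determined by a (finite) set of test points and a radius. -/
def Nb (F : Set X) (ε : ℝ) (A : WijsmanHyperspace X) : Set (WijsmanHyperspace X) :=
  {B | ∀ x ∈ F, |infDist x B.1 - infDist x A.1| < ε}

lemma self_mem_Nb {F : Set X} {ε : ℝ} (hε : 0 < ε) (A : WijsmanHyperspace X) :
    A ∈ Nb F ε A := fun x _ => by simpa using hε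

lemma Nb_mono {F F' : Set X} {ε ε' : ℝ} (hF : F ⊆ F') (hε : ε' ≤ ε)
    (A : WijsmanHyperspace X) : Nb F' ε' A ⊆ Nb F ε A :=
  fun _ hB x hx => lt_of_lt_of_le (hB x (hF hx)) hε

lemma isOpen_Nb {F : Set X} (hF : F.Finite) (ε : ℝ) (A : WijsmanHyperspace X) :
    IsOpen (Nb F ε A) := by
  have h : Nb F ε A =
      ⋂ x ∈ F, (fun B : WijsmanHyperspace X => infDist x B.1) ⁻¹'
        (Metric.ball (infDist x A.1) ε) := by
    ext B
    simp [Nb, Real.dist_eq]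
  rw [h]
  refine hF.isOpen_biInter fun x _ => ?_
  have hφ : Continuous fun A : WijsmanHyperspace X => (fun y : X => infDist y A.1) :=
    continuous_induced_dom (t := Pi.topologicalSpace)
      (f := fun A : WijsmanHyperspace X => fun y : X => infDist y A.1)
  have hc : Continuous fun B : WijsmanHyperspace X => infDist x B.1 :=
    (continuous_apply x).comp hφ
  exact isOpen_ball.preimage hc

lemma exists_Nb_subset {G : Set (WijsmanHyperspace X)} (hG : IsOpen G)
    {A : WijsmanHyperspace X} (hA : A ∈ G) :
    ∃ (F : Set X) (ε : ℝ), F.Finite ∧ 0 < ε ∧ Nb F ε A ⊆ G := by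
  obtain ⟨t, ht, rfl⟩ := isOpen_induced_iff.mp hG
  have hmem : (fun x => infDist x A.1) ∈ t := hA
  obtain ⟨I, u, hu, hsub⟩ := isOpen_pi_iff.mp ht _ hmem
  have hball : ∀ a ∈ I, ∃ δ > 0, Metric.ball (infDist a A.1) δ ⊆ u a := fun a ha =>
    Metric.isOpen_iff.mp (hu a ha).1 _ (hu a ha).2
  choose! δ hδpos hδsub using hball
  rcases I.eq_empty_or_nonempty with hI | hI
  · refine ⟨∅, 1, finite_empty, one_pos, fun B _ => hsub ?_⟩
    intro a ha
    simp [hI] at ha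
  · obtain ⟨a₀, ha₀I, ha₀⟩ := I.exists_min_image δ hI
    refine ⟨↑I, δ a₀, I.finite_toSet, hδpos a₀ ha₀I, fun B hB => ?_⟩
    refine hsub fun a ha => ?_
    have ha' : a ∈ I := ha
    refine hδsub a ha' ?_
    rw [Metric.mem_ball, Real.dist_eq]
    exact lt_of_lt_of_le (hB a ha) (ha₀ a ha')

lemma exists_seq {α : Type*} (Q : ℕ → α → Prop) (R : ℕ → α → α → Prop)
    (h0 : ∃ a, Q 0 a) (hs : ∀ n a, Q n a → ∃ b, Q (n + 1) b ∧ R n a b) :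
    ∃ s : ℕ → α, (∀ n, Q n (s n)) ∧ ∀ n, R n (s n) (s (n + 1)) := by
  choose g hg1 hg2 using hs
  let t : ∀ _ : ℕ, {a : α // Q _ a} := fun n =>
    Nat.rec (motive := fun n => {a : α // Q n a}) ⟨h0.choose, h0.choose_spec⟩
      (fun n p => ⟨g n p.1 p.2, hg1 n p.1 p.2⟩) n
  exact ⟨fun n => (t n).1, fun n => (t n).2, fun n => hg2 n (t n).1 (t n).2⟩

lemma le_infDist' {s : Set X} (hs : s.Nonempty) {x : X} {b : ℝ}
    (h : ∀ y ∈ s, b ≤ dist x y) : b ≤ infDist x s := by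
  by_contra hb
  push_neg at hb
  obtain ⟨y, hy, hdy⟩ := (infDist_lt_iff hs).mp hb
  exact absurd (h y hy) (not_le.mpr hdy)

end WijsmanAux

open WijsmanAux

/-- Zsilinszky: the Wijsman hyperspace of a complete metric space is a Baire
space. -/
theorem stmt15 (X : Type*) [MetricSpace X] [CompleteSpace X] :
    BaireSpace (WijsmanHyperspace X) := by
  constructor
  intro f hopen hdense
  rw [dense_iff_inter_open]
  intro W hW hWne
  classical
  -- state: (current set, finite test-point set, radius)
  set σ := WijsmanHyperspace X × Set X × ℝ with hσ
  set Q : ℕ → σ → Prop := fun n s =>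
    s.2.1.Finite ∧ 0 < s.2.2 ∧ (s.2.1 ∩ s.1.1).Nonempty ∧
    (∀ x ∈ s.2.1, ∃ p ∈ s.2.1 ∩ s.1.1, dist x p < infDist x s.1.1 + s.2.2) ∧
    Nb s.2.1 (6 * s.2.2) s.1 ⊆ (if n = 0 then W ∩ f 0 else f n) with hQdef
  set R : ℕ → σ → σ → Prop := fun _ s t =>
    s.2.1 ⊆ t.2.1 ∧ t.2.2 ≤ s.2.2 / 2 ∧
    Nb t.2.1 (6 * t.2.2) t.1 ⊆ Nb s.2.1 s.2.2 s.1 ∧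
    (∀ p ∈ s.2.1 ∩ s.1.1, ∃ q ∈ t.2.1 ∩ t.1.1, dist p q < 2 * s.2.2) with hRdef
  -- base state
  have h0 : ∃ s, Q 0 s := by
    obtain ⟨A₀, hA₀⟩ := (hdense 0).inter_open_nonempty W hW hWne
    have hopen0 : IsOpen (W ∩ f 0) := hW.inter (hopen 0)
    obtain ⟨F'', ε'', hFfin, hεpos, hsub⟩ := exists_Nb_subset hopen0 hA₀
    have hε6 : 0 < ε'' / 6 := by linarith
    have hwit : ∀ x : X, ∃ p ∈ A₀.1, dist x p < infDist x A₀.1 + ε'' / 6 := by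
      intro x
      exact (infDist_lt_iff A₀.2.1).mp (by linarith)
    choose w hw1 hw2 using hwit
    obtain ⟨a, ha⟩ := A₀.2.1
    refine ⟨(A₀, F'' ∪ (w '' F'' ∪ {a}), ε'' / 6),
      hFfin.union ((hFfin.image w).union (finite_singleton a)), hε6,
      ⟨a, Or.inr (Or.inr rfl), ha⟩, ?_, ?_⟩
    · intro x hx
      rcases hx with hx | hx
      · exact ⟨w x, ⟨Or.inr (Or.inl ⟨x, hx, rfl⟩), hw1 x⟩, hw2 x⟩
      · have hxA : x ∈ A₀.1 := by
          rcases hx with ⟨x', _, rfl⟩ | hx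
          · exact hw1 x'
          · rw [hx]; exact ha
        refine ⟨x, ⟨Or.inr hx, hxA⟩, ?_⟩
        have := infDist_nonneg (x := x) (s := A₀.1)
        simp only [dist_self]
        linarith
    · refine Subset.trans (Nb_mono subset_union_left (show 6 * (ε'' / 6) ≤ ε'' by linarith) A₀) ?_
      simpa using hsub
  -- step
  have hst : ∀ n s, Q n s → ∃ t, Q (n + 1) t ∧ R n s t := by
    intro n s hQs
    obtain ⟨hFfin, hεpos, hne, hwitS, _⟩ := hQs
    have hBopen : IsOpen (Nb s.2.1 s.2.2 s.1) := isOpen_Nb hFfin _ _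
    have hBne : (Nb s.2.1 s.2.2 s.1).Nonempty := ⟨s.1, self_mem_Nb hεpos _⟩
    obtain ⟨A', hA'Nb, hA'f⟩ := (hdense (n + 1)).inter_open_nonempty _ hBopen hBne
    have hopen' : IsOpen (f (n + 1) ∩ Nb s.2.1 s.2.2 s.1) := (hopen (n + 1)).inter hBopen
    obtain ⟨F₁, δ, hF₁fin, hδpos, hδsub⟩ := exists_Nb_subset hopen' ⟨hA'f, hA'Nb⟩
    set ε' := min (δ / 6) (s.2.2 / 2) with hε'def
    have hε'pos : 0 < ε' := lt_min (by linarith) (by linarith)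
    have hwit : ∀ x : X, ∃ p ∈ A'.1, dist x p < infDist x A'.1 + ε' := by
      intro x
      exact (infDist_lt_iff A'.2.1).mp (by linarith)
    choose w hw1 hw2 using hwit
    have hmv : ∀ p, p ∈ s.2.1 ∩ s.1.1 → ∃ q, q ∈ A'.1 ∧ dist p q < 2 * s.2.2 := by
      intro p hp
      have h3 := hA'Nb p hp.1
      have h0' : infDist p s.1.1 = 0 := infDist_zero_of_mem hp.2
      rw [h0', abs_lt] at h3
      have : infDist p A'.1 < 2 * s.2.2 := by linarith [h3.2]
      obtain ⟨q, hq, hdq⟩ := (infDist_lt_iff A'.2.1).mp this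
      exact ⟨q, hq, hdq⟩
    choose! m hm1 hm2 using hmv
    set F' := (s.2.1 ∪ F₁) ∪ (w '' (s.2.1 ∪ F₁) ∪ m '' (s.2.1 ∩ s.1.1)) with hF'def
    have hF'fin : F'.Finite :=
      ((hFfin.union hF₁fin).union
        (((hFfin.union hF₁fin).image w).union ((hFfin.inter_of_left _).image m)))
    have hsub1 : Nb F' (6 * ε') A' ⊆ f (n + 1) ∩ Nb s.2.1 s.2.2 s.1 := by
      refine Subset.trans (Nb_mono ?_ ?_ A') hδsub
      · exact fun x hx => Or.inl (Or.inr hx)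
      · have := min_le_left (δ / 6) (s.2.2 / 2)
        calc 6 * ε' ≤ 6 * (δ / 6) := by linarith
        _ = δ := by ring
    obtain ⟨p₀, hp₀⟩ := hne
    refine ⟨(A', F', ε'), ⟨hF'fin, hε'pos, ?_, ?_, ?_⟩, ?_, min_le_right _ _, hsub1.trans inter_subset_right, ?_⟩
    · exact ⟨m p₀, Or.inr (Or.inr ⟨p₀, hp₀, rfl⟩), (hm1 p₀ hp₀)⟩
    · intro x hx
      rcases hx with hx | hx
      · exact ⟨w x, ⟨Or.inr (Or.inl ⟨x, hx, rfl⟩), hw1 x⟩, hw2 x⟩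
      · have hxA : x ∈ A'.1 := by
          rcases hx with ⟨x', _, rfl⟩ | ⟨x', hx', rfl⟩
          · exact hw1 x'
          · exact hm1 x' hx'
        refine ⟨x, ⟨Or.inr hx, hxA⟩, ?_⟩
        have := infDist_nonneg (x := x) (s := A'.1)
        simp only [dist_self]
        linarith
    · simpa using hsub1.trans inter_subset_left
    · exact fun x hx => Or.inl (Or.inl hx)
    · intro p hp
      exact ⟨m p, ⟨Or.inr (Or.inr ⟨p, hp, rfl⟩), hm1 p hp⟩, hm2 p hp⟩
  obtain ⟨s, hQ, hR⟩ := exists_seq Q R h0 hst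
  -- decode invariants
  have hfin : ∀ n, (s n).2.1.Finite := fun n => (hQ n).1
  have hεpos : ∀ n, 0 < (s n).2.2 := fun n => (hQ n).2.1
  -- nested basic neighborhoods
  have chainSet : ∀ m n, m ≤ n →
      Nb (s n).2.1 (s n).2.2 (s n).1 ⊆ Nb (s m).2.1 (s m).2.2 (s m).1 := by
    intro m n hmn
    induction n, hmn using Nat.le_induction with
    | base => exact Subset.rfl
    | succ n hmn ih =>
        refine Subset.trans ?_ ih
        refine Subset.trans (Nb_mono Subset.rfl ?_ _) (hR n).2.2.1
        have := hεpos (n + 1)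
        linarith
  have chainMem : ∀ m n, m ≤ n → (s n).1 ∈ Nb (s m).2.1 (s m).2.2 (s m).1 :=
    fun m n h => chainSet m n h (self_mem_Nb (hεpos n) _)
  -- radius decay
  have Edecay : ∀ m k, (s (m + k)).2.2 ≤ (s m).2.2 * (1 / 2) ^ k := by
    intro m k
    induction k with
    | zero => simp
    | succ k ih =>
        have h1 := (hR (m + k)).2.1
        have : (s (m + (k + 1))).2.2 = (s (m + k + 1)).2.2 := by ring_nf
        rw [this]
        calc (s (m + k + 1)).2.2 ≤ (s (m + k)).2.2 / 2 := h1
        _ ≤ ((s m).2.2 * (1 / 2) ^ k) / 2 := by linarith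
        _ = (s m).2.2 * (1 / 2) ^ (k + 1) := by ring
  -- move maps
  have hmv : ∀ n, ∃ g : X → X, ∀ p ∈ (s n).2.1 ∩ (s n).1.1,
      g p ∈ (s (n + 1)).2.1 ∩ (s (n + 1)).1.1 ∧ dist p (g p) < 2 * (s n).2.2 := by
    intro n
    choose g hg1 hg2 using (hR n).2.2.2
    exact ⟨fun p => if hp : p ∈ (s n).2.1 ∩ (s n).1.1 then g p hp else p,
      fun p hp => by simp only [dif_pos hp]; exact ⟨hg1 p hp, hg2 p hp⟩⟩
  choose Mv hMv using hmv
  -- orbits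
  let orb : ℕ → X → ℕ → X := fun n p k =>
    Nat.rec p (fun j x => Mv (n + j) x) k
  have orb_succ : ∀ n p k, orb n p (k + 1) = Mv (n + k) (orb n p k) := fun _ _ _ => rfl
  have horb_mem : ∀ n p, p ∈ (s n).2.1 ∩ (s n).1.1 →
      ∀ k, orb n p k ∈ (s (n + k)).2.1 ∩ (s (n + k)).1.1 := by
    intro n p hp k
    induction k with
    | zero => exact hp
    | succ k ih =>
        rw [orb_succ]
        exact (hMv (n + k) _ ih).1
  have horb_dist : ∀ n p, p ∈ (s n).2.1 ∩ (s n).1.1 →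
      ∀ k, dist (orb n p k) (orb n p (k + 1)) ≤ (2 * (s n).2.2) * (1 / 2) ^ k := by
    intro n p hp k
    rw [orb_succ]
    have h1 := (hMv (n + k) _ (horb_mem n p hp k)).2
    have h2 := Edecay n k
    calc dist (orb n p k) (Mv (n + k) (orb n p k)) ≤ 2 * (s (n + k)).2.2 := le_of_lt h1
    _ ≤ (2 * (s n).2.2) * (1 / 2) ^ k := by linarith
  have hlim : ∀ n p, p ∈ (s n).2.1 ∩ (s n).1.1 →
      ∃ y, Tendsto (orb n p) atTop (𝓝 y) ∧ dist p y ≤ 4 * (s n).2.2 := by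
    intro n p hp
    have hcau : CauchySeq (orb n p) :=
      cauchySeq_of_le_geometric (1 / 2) (2 * (s n).2.2) (by norm_num) (horb_dist n p hp)
    obtain ⟨y, hy⟩ := cauchySeq_tendsto_of_complete hcau
    refine ⟨y, hy, ?_⟩
    have hd := dist_le_of_le_geometric_of_tendsto₀ (1 / 2) (2 * (s n).2.2) (by norm_num)
      (horb_dist n p hp) hy
    have : orb n p 0 = p := rfl
    rw [this] at hd
    calc dist p y ≤ (2 * (s n).2.2) / (1 - 1 / 2) := hd
    _ = 4 * (s n).2.2 := by ring
  -- the limit set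
  set L : Set X := {y | ∃ n p, p ∈ (s n).2.1 ∩ (s n).1.1 ∧
      Tendsto (orb n p) atTop (𝓝 y)} with hLdef
  have hLne : L.Nonempty := by
    obtain ⟨p₀, hp₀⟩ := (hQ 0).2.2.1
    obtain ⟨y, hy, _⟩ := hlim 0 p₀ hp₀
    exact ⟨y, 0, p₀, hp₀, hy⟩
  set Ainf : WijsmanHyperspace X := ⟨closure L, hLne.closure, isClosed_closure⟩ with hAinf
  -- lower estimate
  have hlow : ∀ m, ∀ x ∈ (s m).2.1, ∀ y ∈ L,
      infDist x (s m).1.1 - (s m).2.2 ≤ dist x y := by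
    intro m x hx y hy
    obtain ⟨n, p, hp, hy⟩ := hy
    have htd : Tendsto (fun k => dist x (orb n p k)) atTop (𝓝 (dist x y)) :=
      tendsto_const_nhds.dist hy
    refine ge_of_tendsto htd (eventually_atTop.2 ⟨m, fun k hk => ?_⟩)
    have hmem := (horb_mem n p hp k).2
    have h1 : infDist x (s (n + k)).1.1 ≤ dist x (orb n p k) := infDist_le_dist_of_mem hmem
    have h2 := chainMem m (n + k) (le_trans hk (Nat.le_add_left k n)) x hx
    rw [abs_lt] at h2
    linarith [h2.1]
  have hlow' : ∀ m, ∀ x ∈ (s m).2.1,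
      infDist x (s m).1.1 - (s m).2.2 ≤ infDist x Ainf.1 := by
    intro m x hx
    have h1 : infDist x Ainf.1 = infDist x L := infDist_closure
    rw [h1]
    exact le_infDist' hLne (fun y hy => hlow m x hx y hy)
  -- upper estimate
  have hup : ∀ m, ∀ x ∈ (s m).2.1,
      infDist x Ainf.1 < infDist x (s m).1.1 + 5 * (s m).2.2 := by
    intro m x hx
    obtain ⟨p, hp, hdp⟩ := (hQ m).2.2.2.1 x hx
    obtain ⟨y, hy, hdy⟩ := hlim m p hp
    have hyL : y ∈ L := ⟨m, p, hp, hy⟩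
    calc infDist x Ainf.1 = infDist x L := infDist_closure
    _ ≤ dist x y := infDist_le_dist_of_mem hyL
    _ ≤ dist x p + dist p y := dist_triangle x p y
    _ < infDist x (s m).1.1 + 5 * (s m).2.2 := by linarith
  -- Ainf lies in every basic neighborhood
  have hmemNb : ∀ m, Ainf ∈ Nb (s m).2.1 (6 * (s m).2.2) (s m).1 := by
    intro m x hx
    rw [abs_lt]
    constructor
    · have := hlow' m x hx
      have := hεpos m
      linarith
    · have := hup m x hx
      have := hεpos m
      linarith
  have hW0 := (hQ 0).2.2.2.2 (hmemNb 0)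
  rw [if_pos rfl] at hW0
  refine ⟨Ainf, hW0.1, mem_iInter.2 fun n => ?_⟩
  cases n with
  | zero => exact hW0.2
  | succ n =>
      have h := (hQ (n + 1)).2.2.2.2 (hmemNb (n + 1))
      rwa [if_neg (Nat.succ_ne_zero n)] at h
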